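/- If P : E → E is a continuous n-homogeneous polynomial on a finite-dimensional Banach space E and p ≤ 2, then P is almost p-summing at every point of E. -/

import Mathlib

open MeasureTheory Filter Finset

/-- The weak ℓ_q norm of a finite family: `sup_{‖φ‖≤1} (∑ |φ x_j|^q)^{1/q}`. -/
noncomputable def weakNorm {E : Type*} [NormedAddCommGroup E] [NormedSpace ℝ E]
    (q : ℝ) {k : ℕ} (x : Fin k → E) : ℝ :=
  sSup {s : ℝ | ∃ φ : E →L[ℝ] ℝ, ‖φ‖ ≤ 1 ∧ s = (∑ j, |φ (x j)| ^ q) ^ (1 / q)}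

/-- The weak ℓ_q norm of a sequence. -/
noncomputable def weakNormSeq {E : Type*} [NormedAddCommGroup E] [NormedSpace ℝ E]
    (q : ℝ) (x : ℕ → E) : ℝ :=
  sSup {s : ℝ | ∃ φ : E →L[ℝ] ℝ, ‖φ‖ ≤ 1 ∧ s = (∑' j, |φ (x j)| ^ q) ^ (1 / q)}

/-- Unconditionally q-summable sequences: weakly q-summable with weak norms of tails → 0. -/
def UncondSummable {E : Type*} [NormedAddCommGroup E] [NormedSpace ℝ E]
    (q : ℝ) (x : ℕ → E) : Prop :=
  (∀ φ : E →L[ℝ] ℝ, Summable fun j => |φ (x j)| ^ q) ∧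
    Tendsto (fun m => weakNormSeq q fun j => x (j + m)) atTop (nhds 0)

/-- The Rademacher functions on [0,1]. -/
noncomputable def rademacher (j : ℕ) (t : ℝ) : ℝ :=
  if Int.fract ((2 : ℝ) ^ j * t) < 1 / 2 then 1 else -1

/-- `(∫_0^1 ‖∑_j r_j(t) y_j‖² dt)^{1/2}` for a finite family `y` in `F`. -/
noncomputable def radNorm {F : Type*} [NormedAddCommGroup F] [NormedSpace ℝ F]
    {k : ℕ} (y : Fin k → F) : ℝ :=
  (∫ t in (0:ℝ)..1, ‖∑ j : Fin k, rademacher (j : ℕ) t • y j‖ ^ 2) ^ ((1:ℝ) / 2)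

/-- `f` is almost p-summing at `a`. -/
def AlmostSummingAt {E F : Type*} [NormedAddCommGroup E] [NormedSpace ℝ E]
    [NormedAddCommGroup F] [NormedSpace ℝ F] (p : ℝ) (f : E → F) (a : E) : Prop :=
  ∃ C > 0, ∃ ε > 0, ∃ r > 0, ∀ (k : ℕ) (x : Fin k → E), weakNorm p x < ε →
    radNorm (fun j => f (a + x j) - f a) ≤ C * weakNorm p x ^ r

/-- `f` is absolutely (p,q)-summing at `a`. -/
def AbsSummingAt {E F : Type*} [NormedAddCommGroup E] [NormedSpace ℝ E]
    [NormedAddCommGroup F] [NormedSpace ℝ F] (p q : ℝ) (f : E → F) (a : E) : Prop :=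
  ∃ M > 0, ∃ δ > 0, ∃ r > 0, ∀ (k : ℕ) (x : Fin k → E), weakNorm q x < δ →
    (∑ j, ‖f (a + x j) - f a‖ ^ p) ≤ M * weakNorm q x ^ r


section Aux



noncomputable def sq1 (u : ℝ) : ℝ := if Int.fract u < 1 / 2 then 1 else -1

lemma rademacher_eq (j : ℕ) (t : ℝ) : rademacher j t = sq1 ((2:ℝ)^j * t) := rfl

lemma sq1_meas : Measurable sq1 := by
  have : MeasurableSet {u : ℝ | Int.fract u < 1/2} :=
    measurableSet_lt measurable_fract measurable_const
  exact Measurable.ite this measurable_const measurable_const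

lemma sq1_abs (u : ℝ) : |sq1 u| ≤ 1 := by unfold sq1; split <;> simp

lemma sq1_sq (u : ℝ) : sq1 u * sq1 u = 1 := by unfold sq1; split <;> norm_num

lemma sq1_per : Function.Periodic sq1 1 := by
  intro u; unfold sq1; rw [Int.fract_add_one]

lemma bdd_ii {f : ℝ → ℝ} (hf : Measurable f) (B : ℝ) (hB : ∀ t, |f t| ≤ B)
    (a b : ℝ) : IntervalIntegrable f MeasureTheory.volume a b := by
  apply IntervalIntegrable.mono_fun (intervalIntegrable_const (c := B))
    hf.aestronglyMeasurable
  filter_upwards with t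
  simpa [abs_of_nonneg (le_trans (abs_nonneg _) (hB t))] using hB t

lemma sq1_ii (a b : ℝ) : IntervalIntegrable sq1 MeasureTheory.volume a b :=
  bdd_ii sq1_meas 1 sq1_abs a b

lemma sq1_int : ∫ u in (0:ℝ)..1, sq1 u = 0 := by
  have h1 : ∫ u in (0:ℝ)..(1/2), sq1 u = ∫ u in (0:ℝ)..(1/2), (1:ℝ) := by
    apply intervalIntegral.integral_congr_ae
    have : ∀ᵐ u : ℝ, u ≠ 1/2 := by
      refine (ae_iff.2 ?_); simpa using measure_singleton (1/2 : ℝ)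
    filter_upwards [this] with u hu hmem
    rw [Set.uIoc_of_le (by norm_num : (0:ℝ) ≤ 1/2)] at hmem
    have h0 : (0:ℝ) ≤ u := le_of_lt hmem.1
    have h2 : u < 1/2 := lt_of_le_of_ne hmem.2 hu
    unfold sq1
    rw [Int.fract_eq_self.2 ⟨h0, by linarith⟩, if_pos h2]
  have h2 : ∫ u in (1/2:ℝ)..1, sq1 u = ∫ u in (1/2:ℝ)..1, (-1:ℝ) := by
    apply intervalIntegral.integral_congr_ae
    have : ∀ᵐ u : ℝ, u ≠ 1 := by
      refine (ae_iff.2 ?_); simpa using measure_singleton (1 : ℝ)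
    filter_upwards [this] with u hu hmem
    rw [Set.uIoc_of_le (by norm_num : (1/2:ℝ) ≤ 1)] at hmem
    have h0 : (1/2:ℝ) < u := hmem.1
    have hlt : u < 1 := lt_of_le_of_ne hmem.2 hu
    unfold sq1
    rw [Int.fract_eq_self.2 ⟨by linarith, hlt⟩, if_neg (by linarith)]
  have := intervalIntegral.integral_add_adjacent_intervals
    (sq1_ii 0 (1/2)) (sq1_ii (1/2) 1)
  rw [← this, h1, h2]
  simp
  norm_num

lemma per_int_nat {g : ℝ → ℝ} (hg : Function.Periodic g 1)
    (hii : ∀ a b, IntervalIntegrable g MeasureTheory.volume a b) (m : ℕ) :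
    ∫ u in (0:ℝ)..(m:ℝ), g u = (m:ℝ) * ∫ u in (0:ℝ)..1, g u := by
  have := hg.intervalIntegral_add_zsmul_eq (m:ℤ) 0 hii
  simpa using this

lemma sq1_add_nat (x : ℝ) (n : ℕ) : sq1 (x + n) = sq1 x := by
  unfold sq1; rw [Int.fract_add_natCast]

lemma sq1c_meas (c : ℝ) : Measurable (fun u => sq1 (c * u)) :=
  sq1_meas.comp (measurable_const_mul c)

lemma sq1c_ii (c a b : ℝ) : IntervalIntegrable (fun u => sq1 (c * u)) MeasureTheory.volume a b :=
  bdd_ii (sq1c_meas c) 1 (fun t => sq1_abs _) a b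

lemma sq1_prod_ii (c c' a b : ℝ) :
    IntervalIntegrable (fun u => sq1 (c * u) * sq1 (c' * u)) MeasureTheory.volume a b := by
  apply bdd_ii ((sq1c_meas c).mul (sq1c_meas c')) 1 (fun t => ?_) a b
  rw [Pi.mul_apply, abs_mul]
  calc |sq1 (c*t)| * |sq1 (c'*t)| ≤ 1 * 1 :=
        mul_le_mul (sq1_abs _) (sq1_abs _) (abs_nonneg _) zero_le_one
  _ = 1 := by ring

lemma sq1_int_nat (m : ℕ) : ∫ u in (0:ℝ)..(m:ℝ), sq1 u = 0 := by
  rw [per_int_nat sq1_per sq1_ii m, sq1_int, mul_zero]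

lemma sq1_comp_int (m : ℕ) (hm : 1 ≤ m) :
    ∫ u in (0:ℝ)..1, sq1 u * sq1 ((2:ℝ)^m * u) = 0 := by
  obtain ⟨m', rfl⟩ : ∃ m', m = m' + 1 := ⟨m - 1, by omega⟩
  set c : ℝ := (2:ℝ)^(m'+1) with hc
  have hc0 : c ≠ 0 := by positivity
  have hhalf : c * (1/2 : ℝ) = ((2^m' : ℕ) : ℝ) := by
    push_cast
    rw [hc, pow_succ]
    ring
  have hA : ∫ u in (0:ℝ)..(1/2), sq1 (c * u) = 0 := by
    rw [intervalIntegral.integral_comp_mul_left sq1 hc0, mul_zero, hhalf,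
      sq1_int_nat, smul_zero]
  have hone : c * (1 : ℝ) = ((2^(m'+1) : ℕ) : ℝ) := by push_cast; rw [mul_one]
  have hAB : ∫ u in (0:ℝ)..1, sq1 (c * u) = 0 := by
    rw [intervalIntegral.integral_comp_mul_left sq1 hc0, mul_zero, hone,
      sq1_int_nat, smul_zero]
  have hB : ∫ u in (1/2:ℝ)..1, sq1 (c * u) = 0 := by
    have := intervalIntegral.integral_add_adjacent_intervals
      (sq1c_ii c 0 (1/2)) (sq1c_ii c (1/2) 1)
    rw [hAB] at this
    rw [hA] at this
    linarith [this]
  -- now split the product integral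
  have h1 : ∫ u in (0:ℝ)..(1/2), sq1 u * sq1 (c * u) = ∫ u in (0:ℝ)..(1/2), sq1 (c*u) := by
    apply intervalIntegral.integral_congr_ae
    have : ∀ᵐ u : ℝ, u ≠ 1/2 := by
      refine (ae_iff.2 ?_); simpa using measure_singleton (1/2 : ℝ)
    filter_upwards [this] with u hu hmem
    rw [Set.uIoc_of_le (by norm_num : (0:ℝ) ≤ 1/2)] at hmem
    have h2 : u < 1/2 := lt_of_le_of_ne hmem.2 hu
    have : sq1 u = 1 := by
      unfold sq1
      rw [Int.fract_eq_self.2 ⟨le_of_lt hmem.1, by linarith⟩, if_pos h2]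
    rw [this, one_mul]
  have h2 : ∫ u in (1/2:ℝ)..1, sq1 u * sq1 (c * u) = ∫ u in (1/2:ℝ)..1, -sq1 (c*u) := by
    apply intervalIntegral.integral_congr_ae
    have : ∀ᵐ u : ℝ, u ≠ 1 := by
      refine (ae_iff.2 ?_); simpa using measure_singleton (1 : ℝ)
    filter_upwards [this] with u hu hmem
    rw [Set.uIoc_of_le (by norm_num : (1/2:ℝ) ≤ 1)] at hmem
    have hlt : u < 1 := lt_of_le_of_ne hmem.2 hu
    have : sq1 u = -1 := by
      unfold sq1
      rw [Int.fract_eq_self.2 ⟨by linarith [hmem.1], hlt⟩, if_neg (by linarith [hmem.1])]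
    rw [this]; ring
  have ii : ∀ a b : ℝ, IntervalIntegrable (fun u => sq1 u * sq1 (c*u)) MeasureTheory.volume a b := by
    intro a b
    apply bdd_ii (sq1_meas.mul (sq1c_meas c)) 1 (fun t => ?_) a b
    rw [Pi.mul_apply, abs_mul]
    calc |sq1 t| * |sq1 (c*t)| ≤ 1 * 1 :=
          mul_le_mul (sq1_abs _) (sq1_abs _) (abs_nonneg _) zero_le_one
    _ = 1 := by ring
  have hsum := intervalIntegral.integral_add_adjacent_intervals (ii 0 (1/2)) (ii (1/2) 1)
  rw [h1, hA, h2, intervalIntegral.integral_neg, hB] at hsum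
  rw [← hsum]
  norm_num

lemma rad_ortho_lt {i j : ℕ} (hij : i < j) :
    ∫ t in (0:ℝ)..1, rademacher i t * rademacher j t = 0 := by
  set m := j - i with hm
  have hm1 : 1 ≤ m := by omega
  set g : ℝ → ℝ := fun u => sq1 u * sq1 ((2:ℝ)^m * u) with hg
  have hgper : Function.Periodic g 1 := by
    intro u
    have h1 : (2:ℝ)^m * (u + 1) = (2:ℝ)^m * u + ((2^m : ℕ) : ℝ) := by push_cast; ring
    simp only [hg, h1, sq1_add_nat, sq1_per u]
  have hgii : ∀ a b : ℝ, IntervalIntegrable g MeasureTheory.volume a b := by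
    intro a b
    apply bdd_ii (sq1_meas.mul (sq1c_meas _)) 1 (fun t => ?_) a b
    rw [Pi.mul_apply, abs_mul]
    calc |sq1 t| * |sq1 ((2:ℝ)^m*t)| ≤ 1 * 1 :=
          mul_le_mul (sq1_abs _) (sq1_abs _) (abs_nonneg _) zero_le_one
    _ = 1 := by ring
  have hint : ∫ u in (0:ℝ)..1, g u = 0 := sq1_comp_int m hm1
  have heq : ∀ t : ℝ, rademacher i t * rademacher j t = g ((2:ℝ)^i * t) := by
    intro t
    have : (2:ℝ)^m * ((2:ℝ)^i * t) = (2:ℝ)^j * t := by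
      rw [← mul_assoc, ← pow_add]
      congr 2
      omega
    simp only [rademacher_eq, hg, this]
  have hc0 : ((2:ℝ)^i) ≠ 0 := by positivity
  calc ∫ t in (0:ℝ)..1, rademacher i t * rademacher j t
      = ∫ t in (0:ℝ)..1, g ((2:ℝ)^i * t) := by simp only [heq]
    _ = ((2:ℝ)^i)⁻¹ • ∫ u in ((2:ℝ)^i * 0)..((2:ℝ)^i * 1), g u :=
        intervalIntegral.integral_comp_mul_left g hc0
    _ = 0 := by
        rw [mul_zero, mul_one]
        have : ((2:ℝ)^i) = ((2^i : ℕ) : ℝ) := by push_cast; ring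
        rw [this, per_int_nat hgper hgii, hint, mul_zero, smul_zero]

lemma rad_ortho (i j : ℕ) :
    ∫ t in (0:ℝ)..1, rademacher i t * rademacher j t = if i = j then 1 else 0 := by
  rcases lt_trichotomy i j with h | h | h
  · rw [if_neg (by omega), rad_ortho_lt h]
  · subst h
    rw [if_pos rfl]
    have : ∀ t, rademacher i t * rademacher i t = 1 := fun t => by
      rw [rademacher_eq]; exact sq1_sq _
    simp only [this]
    simp
  · rw [if_neg (by omega)]
    have : ∀ t : ℝ, rademacher i t * rademacher j t = rademacher j t * rademacher i t :=
      fun t => mul_comm _ _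
    simp only [this]
    exact rad_ortho_lt h

lemma rad_meas (j : ℕ) : Measurable (rademacher j) := by
  have : rademacher j = fun t => sq1 ((2:ℝ)^j * t) := rfl
  rw [this]; exact sq1c_meas _

lemma rad_abs (j : ℕ) (t : ℝ) : |rademacher j t| ≤ 1 := by
  rw [rademacher_eq]; exact sq1_abs _

lemma rad_prod_ii (i j : ℕ) (a b : ℝ) :
    IntervalIntegrable (fun t => rademacher i t * rademacher j t) MeasureTheory.volume a b := by
  apply bdd_ii ((rad_meas i).mul (rad_meas j)) 1 (fun t => ?_) a b
  rw [Pi.mul_apply, abs_mul]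
  calc |rademacher i t| * |rademacher j t| ≤ 1 * 1 :=
        mul_le_mul (rad_abs _ _) (rad_abs _ _) (abs_nonneg _) zero_le_one
  _ = 1 := by ring



lemma ii_sum {k : ℕ} {F : Fin k → ℝ → ℝ} {a b : ℝ}
    (h : ∀ l, IntervalIntegrable (F l) MeasureTheory.volume a b) :
    IntervalIntegrable (fun t => ∑ l : Fin k, F l t) MeasureTheory.volume a b := by
  have h2 := IntervalIntegrable.sum (μ := MeasureTheory.volume) (a := a) (b := b)
    Finset.univ (f := F) (fun l _ => h l)
  have : (∑ l : Fin k, F l) = fun t => ∑ l : Fin k, F l t := by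
    funext t; exact Finset.sum_apply t Finset.univ F
  rwa [this] at h2

lemma rad_scalar_sq (k : ℕ) (a : Fin k → ℝ) :
    ∫ t in (0:ℝ)..1, (∑ j : Fin k, a j * rademacher (j:ℕ) t)^2 = ∑ j : Fin k, (a j)^2 := by
  have expand : ∀ t : ℝ, (∑ j : Fin k, a j * rademacher (j:ℕ) t)^2
      = ∑ j : Fin k, ∑ l : Fin k, a j * a l * (rademacher (j:ℕ) t * rademacher (l:ℕ) t) := by
    intro t
    rw [sq, Finset.sum_mul_sum]
    apply Finset.sum_congr rfl; intro j _
    apply Finset.sum_congr rfl; intro l _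
    ring
  simp only [expand]
  have ii2 : ∀ j ∈ Finset.univ (α := Fin k), IntervalIntegrable
      (fun t => ∑ l : Fin k, a j * a l * (rademacher (j:ℕ) t * rademacher (l:ℕ) t))
      MeasureTheory.volume 0 1 :=
    fun j _ => ii_sum (fun l => (rad_prod_ii (j:ℕ) (l:ℕ) 0 1).const_mul (a j * a l))
  rw [intervalIntegral.integral_finset_sum ii2]
  apply Finset.sum_congr rfl
  intro j _
  rw [intervalIntegral.integral_finset_sum
    (fun (l : Fin k) _ => (rad_prod_ii (j:ℕ) (l:ℕ) 0 1).const_mul (a j * a l))]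
  simp only [intervalIntegral.integral_const_mul, rad_ortho]
  rw [Finset.sum_eq_single j]
  · simp [sq]
  · intro l _ hl
    rw [if_neg (by simpa [Fin.val_eq_val] using (Ne.symm hl)), mul_zero]
  · intro h; exact absurd (Finset.mem_univ j) h





variable {E : Type*} [NormedAddCommGroup E] [NormedSpace ℝ E]

lemma weakNorm_bddAbove (q : ℝ) (hq : 0 < q) {k : ℕ} (x : Fin k → E) :
    BddAbove {s : ℝ | ∃ φ : E →L[ℝ] ℝ, ‖φ‖ ≤ 1 ∧ s = (∑ j, |φ (x j)| ^ q) ^ (1 / q)} := by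
  refine ⟨(∑ j, ‖x j‖ ^ q) ^ (1 / q), ?_⟩
  rintro s ⟨φ, hφ, rfl⟩
  apply Real.rpow_le_rpow (Finset.sum_nonneg fun j _ => Real.rpow_nonneg (abs_nonneg _) q)
    ?_ (by positivity)
  apply Finset.sum_le_sum
  intro j _
  apply Real.rpow_le_rpow (abs_nonneg _) ?_ hq.le
  calc |φ (x j)| ≤ ‖φ‖ * ‖x j‖ := φ.le_opNorm _
  _ ≤ 1 * ‖x j‖ := by gcongr
  _ = ‖x j‖ := one_mul _

lemma le_weakNorm (q : ℝ) (hq : 0 < q) {k : ℕ} (x : Fin k → E)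
    (φ : E →L[ℝ] ℝ) (hφ : ‖φ‖ ≤ 1) :
    (∑ j, |φ (x j)| ^ q) ^ (1 / q) ≤ weakNorm q x :=
  le_csSup (weakNorm_bddAbove q hq x) ⟨φ, hφ, rfl⟩

lemma weakNorm_nonneg (q : ℝ) (hq : 0 < q) {k : ℕ} (x : Fin k → E) :
    0 ≤ weakNorm q x := by
  have h := le_weakNorm q hq x 0 (by simp)
  calc (0:ℝ) = (∑ j : Fin k, |((0 : E →L[ℝ] ℝ)) (x j)| ^ q) ^ (1 / q) := by
        simp [Real.zero_rpow hq.ne', Real.zero_rpow (by simpa using hq.ne' : q⁻¹ ≠ 0)]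
  _ ≤ weakNorm q x := h

lemma sum_rpow_le_weakNorm_rpow (q : ℝ) (hq : 0 < q) {k : ℕ} (x : Fin k → E)
    (φ : E →L[ℝ] ℝ) (hφ : ‖φ‖ ≤ 1) :
    ∑ j, |φ (x j)| ^ q ≤ weakNorm q x ^ q := by
  have hS : (0:ℝ) ≤ ∑ j, |φ (x j)| ^ q :=
    Finset.sum_nonneg fun j _ => Real.rpow_nonneg (abs_nonneg _) q
  have h := le_weakNorm q hq x φ hφ
  have := Real.rpow_le_rpow (Real.rpow_nonneg hS _) h hq.le
  rwa [one_div, Real.rpow_inv_rpow hS hq.ne'] at this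

lemma exists_dual_family (E : Type*) [NormedAddCommGroup E] [NormedSpace ℝ E]
    [FiniteDimensional ℝ E] :
    ∃ (d : ℕ) (φ : Fin d → E →L[ℝ] ℝ) (c : ℝ), 0 ≤ c ∧ (∀ i, ‖φ i‖ ≤ 1) ∧
      ∀ v : E, ‖v‖ ≤ c * ∑ i, |φ i v| := by
  set d := Module.finrank ℝ E
  set b := Module.finBasis ℝ E
  set ψ : Fin d → E →L[ℝ] ℝ := fun i => LinearMap.toContinuousLinearMap (b.coord i)
  set φ : Fin d → E →L[ℝ] ℝ := fun i => ‖ψ i‖⁻¹ • ψ i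
  refine ⟨d, φ, ∑ i, ‖b i‖ * ‖ψ i‖,
    Finset.sum_nonneg fun i _ => by positivity, fun i => ?_, fun v => ?_⟩
  · show ‖‖ψ i‖⁻¹ • ψ i‖ ≤ 1
    rw [norm_smul (‖ψ i‖⁻¹) (ψ i), norm_inv, norm_norm]
    rcases eq_or_ne ‖ψ i‖ 0 with h | h
    · simp [h]
    · rw [inv_mul_cancel₀ h]
  · have hv : v = ∑ i, b.repr v i • b i := (b.sum_repr v).symm
    have key : ∀ i, |b.repr v i| * ‖b i‖ ≤ (‖b i‖ * ‖ψ i‖) * |φ i v| := by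
      intro i
      have hψv : ψ i v = b.repr v i := rfl
      have hφv : |φ i v| = ‖ψ i‖⁻¹ * |ψ i v| := by
        show |(‖ψ i‖⁻¹ • ψ i) v| = _
        rw [ContinuousLinearMap.smul_apply, smul_eq_mul, abs_mul, abs_inv, abs_norm]
      rcases eq_or_ne ‖ψ i‖ 0 with h | h
      · have : ψ i = 0 := norm_eq_zero.mp h
        have h2 : b.repr v i = 0 := by rw [← hψv, this]; simp
        rw [h2]
        simp only [abs_zero, zero_mul]
        positivity
      · rw [hφv, ← hψv]
        rw [mul_assoc, ← mul_assoc (‖ψ i‖) _ _, mul_inv_cancel₀ h, one_mul, mul_comm]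
    calc ‖v‖ = ‖∑ i, b.repr v i • b i‖ := by rw [← hv]
    _ ≤ ∑ i, ‖b.repr v i • b i‖ := norm_sum_le _ _
    _ = ∑ i, |b.repr v i| * ‖b i‖ := by
        apply Finset.sum_congr rfl; intro i _; rw [norm_smul, Real.norm_eq_abs]
    _ ≤ ∑ i, (‖b i‖ * ‖ψ i‖) * |φ i v| := Finset.sum_le_sum fun i _ => key i
    _ ≤ ∑ i, (∑ l, ‖b l‖ * ‖ψ l‖) * |φ i v| := by
        apply Finset.sum_le_sum; intro i _
        apply mul_le_mul_of_nonneg_right ?_ (abs_nonneg _)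
        exact Finset.single_le_sum (f := fun l => ‖b l‖ * ‖ψ l‖)
          (fun l _ => by positivity) (Finset.mem_univ i)
    _ = (∑ i, ‖b i‖ * ‖ψ i‖) * ∑ i, |φ i v| := by rw [← Finset.mul_sum]


variable {E : Type*} [NormedAddCommGroup E] [NormedSpace ℝ E]

lemma bdd_ii' {f : ℝ → ℝ} (hf : AEStronglyMeasurable f (MeasureTheory.volume))
    (B : ℝ) (hB : ∀ t, |f t| ≤ B) (a b : ℝ) :
    IntervalIntegrable f MeasureTheory.volume a b := by
  apply IntervalIntegrable.mono_fun (intervalIntegrable_const (c := B)) hf.restrict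
  filter_upwards with t
  simpa [abs_of_nonneg (le_trans (abs_nonneg _) (hB t))] using hB t

lemma rad_vector_bound (E : Type*) [NormedAddCommGroup E] [NormedSpace ℝ E]
    [FiniteDimensional ℝ E] :
    ∃ cR : ℝ, 0 ≤ cR ∧ ∀ (k : ℕ) (y : Fin k → E),
      (∫ t in (0:ℝ)..1, ‖∑ j : Fin k, rademacher (j:ℕ) t • y j‖^2)
        ≤ cR * ∑ j, ‖y j‖^2 := by
  obtain ⟨d, φ, c, hc, hφ, hnorm⟩ := exists_dual_family E
  refine ⟨c^2 * d * d, by positivity, fun k y => ?_⟩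
  set v : ℝ → E := fun t => ∑ j : Fin k, rademacher (j:ℕ) t • y j with hv
  set g : ℝ → ℝ := fun t => ‖v t‖^2 with hgdef
  set h : ℝ → ℝ :=
    fun t => (c^2 * d) * ∑ i, (∑ j : Fin k, φ i (y j) * rademacher (j:ℕ) t)^2 with hhdef
  have hφv : ∀ i t, φ i (v t) = ∑ j : Fin k, φ i (y j) * rademacher (j:ℕ) t := by
    intro i t
    rw [hv, map_sum]
    apply Finset.sum_congr rfl
    intro j _
    rw [ContinuousLinearMap.map_smul, smul_eq_mul, mul_comm]
  have hpt : ∀ t, g t ≤ h t := by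
    intro t
    have h1 : ‖v t‖ ≤ c * ∑ i, |φ i (v t)| := hnorm (v t)
    have h2 : g t ≤ (c * ∑ i, |φ i (v t)|)^2 := pow_le_pow_left₀ (norm_nonneg _) h1 2
    have h3 : (∑ i, |φ i (v t)|)^2 ≤ (d:ℝ) * ∑ i, |φ i (v t)|^2 := by
      simpa using sq_sum_le_card_mul_sum_sq (s := Finset.univ) (f := fun i => |φ i (v t)|)
    calc g t ≤ (c * ∑ i, |φ i (v t)|)^2 := h2
    _ = c^2 * (∑ i, |φ i (v t)|)^2 := by rw [mul_pow]
    _ ≤ c^2 * ((d:ℝ) * ∑ i, |φ i (v t)|^2) := by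
        apply mul_le_mul_of_nonneg_left h3 (by positivity)
    _ = h t := by
        simp only [hhdef, mul_assoc, sq_abs, hφv]
  have hvm : AEStronglyMeasurable v (MeasureTheory.volume) := by
    apply Finset.aestronglyMeasurable_fun_sum
    intro j _
    exact ((rad_meas (j:ℕ)).stronglyMeasurable.smul_const (y j)).aestronglyMeasurable
  have hgm : AEStronglyMeasurable g (MeasureTheory.volume) := hvm.norm.pow 2
  have hgii : IntervalIntegrable g MeasureTheory.volume 0 1 := by
    apply bdd_ii' hgm ((∑ j : Fin k, ‖y j‖)^2)
    intro t
    rw [hgdef, abs_of_nonneg (by positivity)]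
    apply pow_le_pow_left₀ (norm_nonneg _)
    calc ‖v t‖ ≤ ∑ j : Fin k, ‖rademacher (j:ℕ) t • y j‖ := norm_sum_le _ _
    _ ≤ ∑ j : Fin k, ‖y j‖ := by
        apply Finset.sum_le_sum
        intro j _
        rw [norm_smul, Real.norm_eq_abs]
        calc |rademacher (j:ℕ) t| * ‖y j‖ ≤ 1 * ‖y j‖ :=
              mul_le_mul_of_nonneg_right (rad_abs _ _) (norm_nonneg _)
        _ = ‖y j‖ := one_mul _
  have hsqii : ∀ i : Fin d, IntervalIntegrable
      (fun t => (∑ j : Fin k, φ i (y j) * rademacher (j:ℕ) t)^2)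
      MeasureTheory.volume 0 1 := by
    intro i
    have hm0 : Measurable (fun t => ∑ j : Fin k, φ i (y j) * rademacher (j:ℕ) t) :=
      Finset.measurable_sum (f := fun (j : Fin k) t => φ i (y j) * rademacher (j:ℕ) t)
        Finset.univ (fun j _ => (rad_meas (j:ℕ)).const_mul _)
    have hm := hm0.pow_const 2
    apply bdd_ii hm ((∑ j : Fin k, |φ i (y j)|)^2)
    intro t
    rw [abs_of_nonneg (by positivity), ← sq_abs]
    apply pow_le_pow_left₀ (abs_nonneg _)
    calc |∑ j : Fin k, φ i (y j) * rademacher (j:ℕ) t|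
        ≤ ∑ j : Fin k, |φ i (y j) * rademacher (j:ℕ) t| := Finset.abs_sum_le_sum_abs _ _
    _ ≤ ∑ j : Fin k, |φ i (y j)| := by
        apply Finset.sum_le_sum
        intro j _
        rw [abs_mul]
        calc |φ i (y j)| * |rademacher (j:ℕ) t| ≤ |φ i (y j)| * 1 :=
              mul_le_mul_of_nonneg_left (rad_abs _ _) (abs_nonneg _)
        _ = |φ i (y j)| := mul_one _
  have hhii : IntervalIntegrable h MeasureTheory.volume 0 1 :=
    (ii_sum hsqii).const_mul _
  calc (∫ t in (0:ℝ)..1, ‖∑ j : Fin k, rademacher (j:ℕ) t • y j‖^2)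
      = ∫ t in (0:ℝ)..1, g t := rfl
  _ ≤ ∫ t in (0:ℝ)..1, h t :=
      intervalIntegral.integral_mono_on (by norm_num) hgii hhii (fun t _ => hpt t)
  _ = (c^2 * d) * ∑ i, ∫ t in (0:ℝ)..1, (∑ j : Fin k, φ i (y j) * rademacher (j:ℕ) t)^2 := by
      rw [hhdef, intervalIntegral.integral_const_mul,
        intervalIntegral.integral_finset_sum (fun i _ => hsqii i)]
  _ = (c^2 * d) * ∑ i : Fin d, ∑ j : Fin k, (φ i (y j))^2 := by
      congr 1
      exact Finset.sum_congr rfl fun i _ => rad_scalar_sq k (fun j => φ i (y j))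
  _ ≤ (c^2 * d) * ∑ i : Fin d, ∑ j : Fin k, ‖y j‖^2 := by
      apply mul_le_mul_of_nonneg_left ?_ (by positivity)
      apply Finset.sum_le_sum; intro i _
      apply Finset.sum_le_sum; intro j _
      rw [← sq_abs]
      apply pow_le_pow_left₀ (abs_nonneg _)
      calc |φ i (y j)| ≤ ‖φ i‖ * ‖y j‖ := (φ i).le_opNorm _
      _ ≤ 1 * ‖y j‖ := mul_le_mul_of_nonneg_right (hφ i) (norm_nonneg _)
      _ = ‖y j‖ := one_mul _
  _ = c^2 * d * d * ∑ j, ‖y j‖^2 := by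
      rw [Finset.sum_const, Finset.card_univ, Fintype.card_fin, nsmul_eq_mul]
      ring


variable {E : Type*} [NormedAddCommGroup E] [NormedSpace ℝ E]

lemma weak_dominates_strong (E : Type*) [NormedAddCommGroup E] [NormedSpace ℝ E]
    [FiniteDimensional ℝ E] (p : ℝ) (hp : 0 < p) :
    ∃ K : ℝ, 0 ≤ K ∧ ∀ (k : ℕ) (x : Fin k → E),
      (∑ j, ‖x j‖ ^ p) ≤ K * weakNorm p x ^ p := by
  obtain ⟨d, φ, c, hc, hφ, hnorm⟩ := exists_dual_family E
  refine ⟨(c * d) ^ p * d, by positivity, fun k x => ?_⟩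
  have key : ∀ j : Fin k, ‖x j‖ ^ p ≤ (c * d) ^ p * ∑ l, |φ l (x j)| ^ p := by
    intro j
    set S : ℝ := ∑ l, |φ l (x j)| ^ p with hS
    have hS0 : 0 ≤ S := Finset.sum_nonneg fun l _ => Real.rpow_nonneg (abs_nonneg _) _
    have h1 : ‖x j‖ ≤ (c * d) * S ^ (1/p) := by
      calc ‖x j‖ ≤ c * ∑ i, |φ i (x j)| := hnorm _
      _ ≤ c * ∑ i : Fin d, S ^ (1/p) := by
          apply mul_le_mul_of_nonneg_left ?_ hc
          apply Finset.sum_le_sum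
          intro i _
          have : |φ i (x j)| = (|φ i (x j)| ^ p) ^ (1/p) := by
            rw [one_div, Real.rpow_rpow_inv (abs_nonneg _) hp.ne']
          rw [this]
          apply Real.rpow_le_rpow (Real.rpow_nonneg (abs_nonneg _) _) ?_ (by positivity)
          exact Finset.single_le_sum (f := fun l => |φ l (x j)| ^ p)
            (fun l _ => Real.rpow_nonneg (abs_nonneg _) _) (Finset.mem_univ i)
      _ = (c * d) * S ^ (1/p) := by
          rw [Finset.sum_const, Finset.card_univ, Fintype.card_fin, nsmul_eq_mul]
          ring
    calc ‖x j‖ ^ p ≤ ((c * d) * S ^ (1/p)) ^ p :=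
          Real.rpow_le_rpow (norm_nonneg _) h1 hp.le
    _ = (c * d) ^ p * S := by
        rw [Real.mul_rpow (by positivity) (Real.rpow_nonneg hS0 _), one_div,
          Real.rpow_inv_rpow hS0 hp.ne']
  calc ∑ j, ‖x j‖ ^ p ≤ ∑ j, (c * d) ^ p * ∑ l, |φ l (x j)| ^ p :=
        Finset.sum_le_sum fun j _ => key j
  _ = (c * d) ^ p * ∑ l : Fin d, ∑ j, |φ l (x j)| ^ p := by
      rw [← Finset.mul_sum, Finset.sum_comm]
  _ ≤ (c * d) ^ p * ∑ l : Fin d, weakNorm p x ^ p := by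
      apply mul_le_mul_of_nonneg_left ?_ (by positivity)
      exact Finset.sum_le_sum fun l _ => sum_rpow_le_weakNorm_rpow p hp x (φ l) (hφ l)
  _ = (c * d) ^ p * d * weakNorm p x ^ p := by
      rw [Finset.sum_const, Finset.card_univ, Fintype.card_fin, nsmul_eq_mul]
      ring

end Aux

theorem stmt10 {E : Type*} [NormedAddCommGroup E] [NormedSpace ℝ E]
    [FiniteDimensional ℝ E]
    (p : ℝ) (hp1 : 1 ≤ p) (hp2 : p ≤ 2) (n : ℕ) (hn : 1 ≤ n)
    (T : ContinuousMultilinearMap ℝ (fun _ : Fin n => E) E) :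
    ∀ a : E, AlmostSummingAt p (fun x => T fun _ => x) a := by
  intro a
  have hp : (0:ℝ) < p := by linarith
  obtain ⟨cR, hcR, hrad⟩ := rad_vector_bound E
  obtain ⟨K, hK, hweak⟩ := weak_dominates_strong E p hp
  set L : ℝ := ‖T‖ * n * (‖a‖ + 1)^(n-1) + 1 with hL
  have hL1 : 1 ≤ L := by
    have : (0:ℝ) ≤ ‖T‖ * n * (‖a‖ + 1)^(n-1) := by positivity
    linarith
  have hL0 : 0 < L := by linarith
  -- Lipschitz estimate
  have lip : ∀ x : E, ‖x‖ ≤ 1 →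
      ‖T (fun _ => a + x) - T (fun _ => a)‖ ≤ L * ‖x‖ := by
    intro x hx
    have h := T.norm_image_sub_le (fun _ => a + x) (fun _ => a)
    have hcard : Fintype.card (Fin n) = n := Fintype.card_fin n
    have hm1 : ‖(fun _ : Fin n => a + x)‖ ≤ ‖a‖ + 1 := by
      rw [pi_norm_le_iff_of_nonneg (by positivity)]
      intro i
      calc ‖a + x‖ ≤ ‖a‖ + ‖x‖ := norm_add_le _ _
      _ ≤ ‖a‖ + 1 := by linarith
    have hm2 : ‖(fun _ : Fin n => a)‖ ≤ ‖a‖ + 1 := by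
      rw [pi_norm_le_iff_of_nonneg (by positivity)]
      intro i
      linarith [norm_nonneg x]
    have hsub : ‖(fun _ : Fin n => a + x) - (fun _ : Fin n => a)‖ ≤ ‖x‖ := by
      rw [pi_norm_le_iff_of_nonneg (norm_nonneg x)]
      intro i
      simp
    have hmax : max ‖(fun _ : Fin n => a + x)‖ ‖(fun _ : Fin n => a)‖ ≤ ‖a‖ + 1 :=
      max_le hm1 hm2
    calc ‖T (fun _ => a + x) - T (fun _ => a)‖
        ≤ ‖T‖ * Fintype.card (Fin n) *
            max ‖(fun _ : Fin n => a + x)‖ ‖(fun _ : Fin n => a)‖ ^ (Fintype.card (Fin n) - 1) *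
            ‖(fun _ : Fin n => a + x) - (fun _ : Fin n => a)‖ := h
    _ ≤ ‖T‖ * n * (‖a‖ + 1)^(n-1) * ‖x‖ := by
        rw [hcard]
        apply mul_le_mul ?_ hsub (norm_nonneg _) (by positivity)
        apply mul_le_mul_of_nonneg_left ?_ (by positivity)
        apply pow_le_pow_left₀ (le_trans (norm_nonneg _) (le_max_left _ _)) hmax
    _ ≤ L * ‖x‖ := by
        apply mul_le_mul_of_nonneg_right ?_ (norm_nonneg _)
        rw [hL]; linarith
  set A : ℝ := (K + 1) ^ (1/p) with hA
  have hA0 : 0 < A := Real.rpow_pos_of_pos (by linarith) _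
  set ε : ℝ := ((A + 1) * (L + 1))⁻¹ with hε
  have hε0 : 0 < ε := by positivity
  set D : ℝ := cR * L ^ 2 * A ^ (2 - p) * K + 1 with hD
  have hD0 : 0 < D := by
    have : (0:ℝ) ≤ cR * L ^ 2 * A ^ (2 - p) * K := by
      apply mul_nonneg (mul_nonneg (mul_nonneg hcR (by positivity))
        (Real.rpow_nonneg hA0.le _)) hK
    linarith
  refine ⟨D ^ ((1:ℝ)/2), Real.rpow_pos_of_pos hD0 _, ε, hε0, 1, by norm_num, ?_⟩
  intro k x hWε
  set W : ℝ := weakNorm p x with hWdef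
  have hW0 : 0 ≤ W := weakNorm_nonneg p hp x
  have hxj : ∀ j, ‖x j‖ ≤ A * W := by
    intro j
    have h1 : ‖x j‖ ^ p ≤ (K+1) * W ^ p := by
      calc ‖x j‖ ^ p ≤ ∑ l, ‖x l‖ ^ p :=
            Finset.single_le_sum (f := fun l => ‖x l‖ ^ p)
              (fun l _ => Real.rpow_nonneg (norm_nonneg _) _) (Finset.mem_univ j)
      _ ≤ K * W ^ p := hweak k x
      _ ≤ (K+1) * W ^ p := by
          apply mul_le_mul_of_nonneg_right (by linarith) (Real.rpow_nonneg hW0 _)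
    calc ‖x j‖ = (‖x j‖ ^ p) ^ (1/p) := by
          rw [one_div, Real.rpow_rpow_inv (norm_nonneg _) hp.ne']
    _ ≤ ((K+1) * W ^ p) ^ (1/p) :=
        Real.rpow_le_rpow (Real.rpow_nonneg (norm_nonneg _) _) h1 (by positivity)
    _ = A * W := by
        rw [Real.mul_rpow (by linarith) (Real.rpow_nonneg hW0 _), ← hA, one_div,
          Real.rpow_rpow_inv hW0 hp.ne']
  show radNorm (fun j => T (fun _ => a + x j) - T (fun _ => a)) ≤ D ^ ((1:ℝ)/2) * W ^ 1
  rcases eq_or_lt_of_le hW0 with hW | hW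
  · -- degenerate case W = 0
    have hx0 : ∀ j, x j = 0 := by
      intro j
      have := hxj j
      rw [← hW, mul_zero] at this
      exact norm_le_zero_iff.mp this
    unfold radNorm
    simp only [hx0, add_zero, sub_self, smul_zero, Finset.sum_const_zero, norm_zero]
    rw [← hW]
    simp only [mul_zero, pow_one]
    rw [zero_pow (by norm_num : (2:ℕ) ≠ 0)]
    rw [intervalIntegral.integral_const, smul_zero, Real.zero_rpow (by norm_num : (1:ℝ)/2 ≠ 0)]
  -- main case W > 0
  have hxj1 : ∀ j, ‖x j‖ ≤ 1 ∧ L * ‖x j‖ ≤ 1 := by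
    intro j
    have hLA : L * A ≤ (A+1) * (L+1) := by nlinarith
    have h2 : L * (A * W) ≤ (A+1) * (L+1) * W := by
      rw [← mul_assoc]
      exact mul_le_mul_of_nonneg_right hLA hW0
    have h3 : (A+1) * (L+1) * W ≤ 1 := by
      rw [hε] at hWε
      calc (A+1) * (L+1) * W ≤ (A+1) * (L+1) * ((A + 1) * (L + 1))⁻¹ := by
            apply mul_le_mul_of_nonneg_left hWε.le (by positivity)
      _ = 1 := by field_simp
    have h4 : L * ‖x j‖ ≤ 1 := by
      calc L * ‖x j‖ ≤ L * (A * W) := mul_le_mul_of_nonneg_left (hxj j) hL0.le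
      _ ≤ 1 := le_trans h2 h3
    have h5 : ‖x j‖ ≤ 1 := by
      calc ‖x j‖ = 1 * ‖x j‖ := (one_mul _).symm
      _ ≤ L * ‖x j‖ := mul_le_mul_of_nonneg_right hL1 (norm_nonneg _)
      _ ≤ 1 := h4
    exact ⟨h5, h4⟩
  set y : Fin k → E := fun j => T (fun _ => a + x j) - T (fun _ => a) with hy
  have hyL : ∀ j, ‖y j‖ ≤ L * ‖x j‖ := fun j => lip (x j) (hxj1 j).1
  -- sum of squares estimate
  have hx2 : ∀ j, ‖x j‖^2 ≤ ‖x j‖ ^ p * (A * W) ^ (2 - p) := by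
    intro j
    rcases eq_or_lt_of_le (norm_nonneg (x j)) with h0 | h0
    · rw [← h0]
      rw [zero_pow (by norm_num : (2:ℕ) ≠ 0), Real.zero_rpow hp.ne', zero_mul]
    · have e1 : ‖x j‖^(2:ℕ) = ‖x j‖ ^ ((2:ℝ)) := by
        rw [← Real.rpow_natCast (‖x j‖) 2]
        norm_num
      have e2 : ‖x j‖ ^ ((2:ℝ)) = ‖x j‖ ^ p * ‖x j‖ ^ (2 - p) := by
        rw [← Real.rpow_add h0]
        norm_num
      rw [e1, e2]
      apply mul_le_mul_of_nonneg_left ?_ (Real.rpow_nonneg (norm_nonneg _) _)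
      exact Real.rpow_le_rpow (norm_nonneg _) (hxj j) (by linarith)
  have hsq : ∑ j, ‖y j‖^2 ≤ L ^ 2 * A ^ (2-p) * K * W ^ 2 := by
    have step1 : ∀ j, ‖y j‖^2 ≤ L^2 * (‖x j‖ ^ p * (A * W) ^ (2 - p)) := by
      intro j
      calc ‖y j‖^2 ≤ (L * ‖x j‖)^2 := by
            apply pow_le_pow_left₀ (norm_nonneg _) (hyL j)
      _ = L^2 * ‖x j‖^2 := by rw [mul_pow]
      _ ≤ L^2 * (‖x j‖ ^ p * (A * W) ^ (2 - p)) :=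
          mul_le_mul_of_nonneg_left (hx2 j) (by positivity)
    calc ∑ j, ‖y j‖^2 ≤ ∑ j, L^2 * (‖x j‖ ^ p * (A * W) ^ (2 - p)) :=
          Finset.sum_le_sum fun j _ => step1 j
    _ = L^2 * (A * W) ^ (2 - p) * ∑ j, ‖x j‖ ^ p := by
        rw [← Finset.mul_sum, Finset.mul_sum, Finset.mul_sum]
        apply Finset.sum_congr rfl
        intro j _
        ring
    _ ≤ L^2 * (A * W) ^ (2 - p) * (K * W ^ p) := by
        apply mul_le_mul_of_nonneg_left (hweak k x) (by positivity)
    _ = L ^ 2 * A ^ (2-p) * K * W ^ 2 := by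
        rw [Real.mul_rpow hA0.le hW0]
        have : W ^ (2 - p) * W ^ p = W ^ (2:ℕ) := by
          rw [← Real.rpow_add hW]
          rw [← Real.rpow_natCast W 2]
          norm_num
        calc L^2 * (A ^ (2-p) * W ^ (2-p)) * (K * W ^ p)
            = L^2 * A ^ (2-p) * K * (W ^ (2-p) * W ^ p) := by ring
        _ = L ^ 2 * A ^ (2-p) * K * W ^ 2 := by rw [this]
  have hI : (∫ t in (0:ℝ)..1, ‖∑ j : Fin k, rademacher (j:ℕ) t • y j‖^2) ≤ D * W ^ 2 := by
    calc (∫ t in (0:ℝ)..1, ‖∑ j : Fin k, rademacher (j:ℕ) t • y j‖^2)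
        ≤ cR * ∑ j, ‖y j‖^2 := hrad k y
    _ ≤ cR * (L ^ 2 * A ^ (2-p) * K * W ^ 2) := mul_le_mul_of_nonneg_left hsq hcR
    _ = (cR * L ^ 2 * A ^ (2-p) * K) * W ^ 2 := by ring
    _ ≤ D * W ^ 2 := by
        apply mul_le_mul_of_nonneg_right ?_ (by positivity)
        rw [hD]; linarith
  have hI0 : (0:ℝ) ≤ ∫ t in (0:ℝ)..1, ‖∑ j : Fin k, rademacher (j:ℕ) t • y j‖^2 := by
    apply intervalIntegral.integral_nonneg (by norm_num)
    intro t _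
    positivity
  have final : radNorm y ≤ D ^ ((1:ℝ)/2) * W ^ 1 := by
    unfold radNorm
    calc (∫ t in (0:ℝ)..1, ‖∑ j : Fin k, rademacher (j:ℕ) t • y j‖^2) ^ ((1:ℝ)/2)
        ≤ (D * W ^ 2) ^ ((1:ℝ)/2) := Real.rpow_le_rpow hI0 hI (by norm_num)
    _ = D ^ ((1:ℝ)/2) * W ^ 1 := by
        rw [Real.mul_rpow hD0.le (by positivity)]
        congr 1
        rw [← Real.rpow_natCast W 2, ← Real.rpow_mul hW0, pow_one]
        norm_num
  exact final
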